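/- Let h : C² → C² be given by h(x,y) = (x^λ + y^μ, x) with integers λ > μ ≥ 1. In the local coordinates (t,x) near the point I = [0:0:1] of P², the extension of h is h(t,x) = (t/x, (x^λ + t^{λ-μ})/(x t^{λ-1})). If 0 < |t| < |x| < 1 and |x^λ + t^{λ-μ}| < |x| |t|^{λ-1}, then |x|^λ < 2|t|^{λ-μ}, and consequently |t|/|x| ≥ 2^{-1/(λ-μ)} |x|^{μ/(λ-μ)}. -/

import Mathlib

/-- The key estimate for h(x,y) = (x^λ + y^μ, x) near I = [0:0:1]: if 0 < |t| < |x| < 1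
and |x^λ + t^{λ-μ}| < |x| |t|^{λ-1}, then |x|^λ < 2|t|^{λ-μ} and hence
|t|/|x| ≥ 2^{-1/(λ-μ)} |x|^{μ/(λ-μ)}. -/
theorem stmt_12 (lam mu : ℕ) (hmu : 1 ≤ mu) (hml : mu < lam) (t x : ℂ)
    (ht0 : 0 < ‖t‖) (htx : ‖t‖ < ‖x‖)
    (hx1 : ‖x‖ < 1)
    (h : ‖x ^ lam + t ^ (lam - mu)‖ < ‖x‖ * ‖t‖ ^ (lam - 1)) :
    ‖x‖ ^ lam < 2 * ‖t‖ ^ (lam - mu) ∧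
    (2 : ℝ) ^ (-(1 : ℝ) / ((lam : ℝ) - mu)) * ‖x‖ ^ ((mu : ℝ) / ((lam : ℝ) - mu)) ≤
      ‖t‖ / ‖x‖ := by
  set a := ‖x‖ with ha_def
  set s := ‖t‖ with hs_def
  have ha : 0 < a := lt_trans ht0 htx
  have hs1 : s < 1 := lt_trans htx hx1
  have hexp : lam - 1 = (mu - 1) + (lam - mu) := by omega
  have key : a * s ^ (lam - 1) ≤ s ^ (lam - mu) := by
    rw [hexp, pow_add]
    calc a * (s ^ (mu - 1) * s ^ (lam - mu))
        = (a * s ^ (mu - 1)) * s ^ (lam - mu) := by ring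
      _ ≤ 1 * s ^ (lam - mu) := by
          apply mul_le_mul_of_nonneg_right _ (pow_nonneg ht0.le _)
          calc a * s ^ (mu - 1) ≤ 1 * 1 := by
                apply mul_le_mul hx1.le _ (pow_nonneg ht0.le _) zero_le_one
                exact pow_le_one₀ ht0.le hs1.le
            _ = 1 := by ring
      _ = s ^ (lam - mu) := one_mul _
  have part1 : a ^ lam < 2 * s ^ (lam - mu) := by
    have h1 : a ^ lam ≤ ‖x ^ lam + t ^ (lam - mu)‖ + s ^ (lam - mu) := by
      have := norm_sub_le (x ^ lam + t ^ (lam - mu)) (t ^ (lam - mu))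
      simpa [norm_pow] using this
    calc a ^ lam ≤ ‖x ^ lam + t ^ (lam - mu)‖ + s ^ (lam - mu) := h1
      _ < a * s ^ (lam - 1) + s ^ (lam - mu) := by linarith
      _ ≤ s ^ (lam - mu) + s ^ (lam - mu) := by linarith
      _ = 2 * s ^ (lam - mu) := by ring
  refine ⟨part1, ?_⟩
  -- part 2
  have hk : (0:ℝ) < (lam : ℝ) - mu := by
    have : (mu : ℝ) < lam := by exact_mod_cast hml
    linarith
  set c : ℝ := (lam : ℝ) - mu with hc_def
  have hcast : ((lam - mu : ℕ) : ℝ) = c := by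
    rw [hc_def]; push_cast [Nat.cast_sub hml.le]; ring
  -- a^lam / 2 < s^(lam-mu)
  have h2 : a ^ (lam : ℝ) / 2 < s ^ c := by
    rw [← hcast, Real.rpow_natCast, Real.rpow_natCast]
    linarith
  have hlhs : (0:ℝ) < a ^ (lam : ℝ) / 2 := by positivity
  have h3 : (a ^ (lam : ℝ) / 2) ^ ((1:ℝ) / c) < s := by
    have h4 := Real.rpow_lt_rpow hlhs.le h2 (by positivity : (0:ℝ) < 1/c)
    rwa [← Real.rpow_mul ht0.le, mul_one_div, div_self hk.ne', Real.rpow_one] at h4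
  have heq : (2 : ℝ) ^ (-(1 : ℝ) / c) * a ^ ((mu : ℝ) / c)
      = (a ^ (lam : ℝ) / 2) ^ ((1:ℝ) / c) / a := by
    rw [Real.div_rpow (by positivity) (by norm_num), ← Real.rpow_mul ha.le,
      neg_div, Real.rpow_neg (by norm_num), ← div_eq_inv_mul]
    have hlamc : (lam : ℝ) = (mu : ℝ) + c := by rw [hc_def]; ring
    have hexp2 : (lam : ℝ) * (1 / c) = (mu : ℝ) / c + 1 := by
      rw [hlamc]; field_simp
    rw [hexp2, Real.rpow_add ha, Real.rpow_one]
    field_simp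
  rw [heq]
  gcongr
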